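/- Let n, m \geq 1, let p_1 < \cdots < p_m and q_1 < \cdots < q_m be integers in [1,2n] with q_i \leq p_i for all i, such that no two elements of \{p_1,\ldots,p_m\} sum to 2n+1 and no two elements of \{q_1,\ldots,q_m\} sum to 2n+1. Let 1 \leq k \leq m satisfy q_k \leq n < p_k. Then \#\{j \in [1,m] : j \neq k,\ q_j + q_k < 2n+1 < p_j + p_k\} \leq p_k - q_k - 1. -/

import Mathlib

theorem stmt8 (n m : ℕ) (hn : 1 ≤ n) (hm : 1 ≤ m) (p q : Fin m → ℤ)
    (hp : StrictMono p) (hq : StrictMono q)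
    (hpmem : ∀ i, 1 ≤ p i ∧ p i ≤ 2 * n) (hqmem : ∀ i, 1 ≤ q i ∧ q i ≤ 2 * n)
    (hle : ∀ i, q i ≤ p i)
    (hpsum : ∀ i j, p i + p j ≠ 2 * n + 1)
    (hqsum : ∀ i j, q i + q j ≠ 2 * n + 1)
    (k : Fin m) (hk₁ : q k ≤ n) (hk₂ : (n : ℤ) < p k) :
    ((Finset.univ.filter (fun j : Fin m =>
        j ≠ k ∧ q j + q k < 2 * n + 1 ∧ (2 * n + 1 : ℤ) < p j + p k)).card : ℤ)
      ≤ p k - q k - 1 := by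
  classical
  set S := Finset.univ.filter (fun j : Fin m =>
      j ≠ k ∧ q j + q k < 2 * n + 1 ∧ (2 * n + 1 : ℤ) < p j + p k) with hS
  set S1 := S.filter (fun j => j < k) with hS1
  set S2 := S.filter (fun j => k < j) with hS2
  have hsplit : S = S1 ∪ S2 := by
    ext j
    simp only [hS1, hS2, Finset.mem_union, Finset.mem_filter]
    constructor
    · intro hj
      rcases lt_or_gt_of_ne (by simpa [hS] using (Finset.mem_filter.mp hj).2.1 : j ≠ k) with h | h
      · exact Or.inl ⟨hj, h⟩
      · exact Or.inr ⟨hj, h⟩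
    · rintro (⟨hj, _⟩ | ⟨hj, _⟩) <;> exact hj
  have hdisj : Disjoint S1 S2 := by
    simp only [hS1, hS2, Finset.disjoint_left, Finset.mem_filter]
    rintro a ⟨_, h1⟩ ⟨_, h2⟩
    exact absurd (h1.trans h2) (lt_irrefl a)
  have hb1 : S1.card ≤ (Finset.Icc (2 * (n : ℤ) + 2 - p k) (n : ℤ)).card := by
    apply Finset.card_le_card_of_injOn (fun j => min (p j) (2 * n + 1 - p j))
    · intro j hj
      simp only [Finset.mem_coe, hS1, hS, Finset.mem_filter, Finset.mem_univ, true_and] at hj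
      obtain ⟨⟨hne, hq1, hp1⟩, hjk⟩ := hj
      have h2 : p j < p k := hp hjk
      simp only [Finset.mem_coe, Finset.mem_Icc]
      omega
    · intro j hj j' hj' heq
      simp only [Finset.mem_coe] at hj hj'
      have hsum := hpsum j j'
      have : p j = p j' ∨ p j + p j' = 2 * n + 1 := by
        simp only at heq; omega
      rcases this with h | h
      · exact hp.injective h
      · exact absurd h hsum
  have hb2 : S2.card ≤ (Finset.Icc (q k + 1) (n : ℤ)).card := by
    apply Finset.card_le_card_of_injOn (fun j => min (q j) (2 * n + 1 - q j))
    · intro j hj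
      simp only [Finset.mem_coe, hS2, hS, Finset.mem_filter, Finset.mem_univ, true_and] at hj
      obtain ⟨⟨hne, hq1, hp1⟩, hjk⟩ := hj
      have h2 : q k < q j := hq hjk
      simp only [Finset.mem_coe, Finset.mem_Icc]
      omega
    · intro j hj j' hj' heq
      have hsum := hqsum j j'
      have : q j = q j' ∨ q j + q j' = 2 * n + 1 := by
        simp only at heq; omega
      rcases this with h | h
      · exact hq.injective h
      · exact absurd h hsum
  have hc1 : ((Finset.Icc (2 * (n : ℤ) + 2 - p k) (n : ℤ)).card : ℤ) = p k - n - 1 := by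
    rw [Int.card_Icc]
    rw [Int.toNat_of_nonneg (by omega)]
    ring
  have hc2 : ((Finset.Icc ((q k : ℤ) + 1) (n : ℤ)).card : ℤ) = n - q k := by
    rw [Int.card_Icc]
    rw [Int.toNat_of_nonneg (by omega)]
    ring
  have hcard : S.card = S1.card + S2.card := by
    rw [hsplit, Finset.card_union_of_disjoint hdisj]
  rw [hcard]
  push_cast
  have e1 : (S1.card : ℤ) ≤ p k - n - 1 := by
    rw [← hc1]; exact_mod_cast hb1
  have e2 : (S2.card : ℤ) ≤ n - q k := by
    rw [← hc2]; exact_mod_cast hb2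
  omega
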